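/- Let F ⊣ G be an adjunction l ⊣ r : C → D (l : D → C, r : C → D) in Cat with r fully faithful, with unit η : 1 ⟶ r ∘ l and invertible counit ε. Let q : D → D[η⁻¹] be the localization of D at the components of η, and let l' : D[η⁻¹] → C be the unique functor with l' ∘ q = l. Then l' and q ∘ r form an equivalence of categories between D[η⁻¹] and C. -/

import Mathlib

open CategoryTheory

/-- The class of morphisms of `D` consisting of the components of the unit of an
adjunction `l ⊣ r`. -/
def unitMorphisms {C D : Type*} [Category C] [Category D]
    (l : D ⥤ C) (r : C ⥤ D) (adj : l ⊣ r) : MorphismProperty D :=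
  fun X Y f => ∃ h : Y = r.obj (l.obj X), f ≫ eqToHom h = adj.unit.app X

/-- Let `l ⊣ r` be an adjunction with `r` fully faithful, let
`q : D ⥤ E` be the localization of `D` at the components of the unit `η`, and
let `l' : E ⥤ C` be the (unique) functor with `q ⋙ l' = l`.  Then `l'` and
`r ⋙ q` form an equivalence of categories between the localization `E` and
`C`. -/
theorem localization_at_unit_equivalence {C D E : Type*}
    [Category C] [Category D] [Category E]
    (l : D ⥤ C) (r : C ⥤ D) (adj : l ⊣ r) [r.Full] [r.Faithful]
    (q : D ⥤ E) [q.IsLocalization (unitMorphisms l r adj)]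
    (l' : E ⥤ C) (hl' : q ⋙ l' = l) :
    Nonempty (𝟭 E ≅ l' ⋙ r ⋙ q) ∧ Nonempty ((r ⋙ q) ⋙ l' ≅ 𝟭 C) := by
  constructor
  · -- build `q ≅ l ⋙ (r ⋙ q)` from the unit, then lift
    have hW : ∀ X : D, unitMorphisms l r adj (adj.unit.app X) :=
      fun X => ⟨rfl, Category.comp_id _⟩
    have hiso : ∀ X : D, IsIso (q.map (adj.unit.app X)) :=
      fun X => Localization.inverts q (unitMorphisms l r adj) _ (hW X)
    have e : q ≅ l ⋙ r ⋙ q :=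
      NatIso.ofComponents (fun X => @asIso _ _ _ _ _ (hiso X))
        (fun f => by
          dsimp
          simp only [← q.map_comp]
          exact congrArg q.map (by simp [adj.unit.naturality f]))
    letI : Localization.Lifting q (unitMorphisms l r adj) q (𝟭 E) :=
      ⟨q.rightUnitor⟩
    letI : Localization.Lifting q (unitMorphisms l r adj) (l ⋙ r ⋙ q)
        (l' ⋙ r ⋙ q) :=
      ⟨(Functor.associator _ _ _).symm ≪≫
        Functor.isoWhiskerRight (eqToIso hl') (r ⋙ q)⟩
    exact ⟨Localization.liftNatIso q (unitMorphisms l r adj) q (l ⋙ r ⋙ q)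
      (𝟭 E) (l' ⋙ r ⋙ q) e⟩
  · exact ⟨(Functor.associator _ _ _).symm ≪≫
      Functor.isoWhiskerLeft r (eqToIso hl') ≪≫ asIso adj.counit⟩
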